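/- Let h : (R,∞) → [0,∞) be measurable (R > 0), and define the Hilbert space F consisting of ξ ∈ L²((R,∞), h dz) whose weak derivative ξ′ belongs to L²((R,∞), z·h(z) dz), with norm ‖ξ‖² = ‖ξ‖²_{L²(h dz)} + ‖ξ′‖²_{L²(z h dz)}. Suppose there exist ε, ϱ > 0 and a sequence r_n → ∞ such that for all n, ∫_{r_n}^∞ h(z) dz > ϱ ∫_{r_n − ε}^{r_n} z h(z) dz. Then the inclusion map F ↪ L²((R,∞), h dz) is not a compact operator. -/

import Mathlib

open MeasureTheory Set Filter

noncomputable section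
namespace EmbNC

/-- tent function: continuous, supported on `[0,1]`, positive on `(0,1)`. -/
def g (t : ℝ) : ℝ := max 0 (min t (1 - t))

lemma g_cont : Continuous g :=
  continuous_const.max (continuous_id.min (continuous_const.sub continuous_id))

lemma g_nonneg (t : ℝ) : 0 ≤ g t := le_max_left _ _

lemma g_le_one (t : ℝ) : g t ≤ 1 := by
  rcases le_total t (1/2) with H | H
  · exact max_le one_pos.le ((min_le_left _ _).trans (by linarith))
  · exact max_le one_pos.le ((min_le_right _ _).trans (by linarith))

lemma g_zero_of_nonpos {t : ℝ} (ht : t ≤ 0) : g t = 0 :=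
  max_eq_left ((min_le_left _ _).trans ht)

lemma g_zero_of_one_le {t : ℝ} (ht : 1 ≤ t) : g t = 0 :=
  max_eq_left ((min_le_right _ _).trans (by linarith))

/-- cutoff primitive: `p x = ∫ 0..x g`. -/
def p (x : ℝ) : ℝ := ∫ t in (0:ℝ)..x, g t

lemma p_hasDerivAt (x : ℝ) : HasDerivAt p (g x) x :=
  (g_cont.integral_hasStrictDerivAt 0 x).hasDerivAt

lemma p_mono : Monotone p := by
  intro x y hxy
  have hadd := intervalIntegral.integral_add_adjacent_intervals
    (g_cont.intervalIntegrable (μ := volume) 0 x) (g_cont.intervalIntegrable (μ := volume) x y)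
  have hnn : 0 ≤ ∫ t in x..y, g t :=
    intervalIntegral.integral_nonneg hxy (fun t _ => g_nonneg t)
  have : p y = p x + ∫ t in x..y, g t := by rw [p, p, ← hadd]
  linarith

lemma p_of_nonpos {x : ℝ} (hx : x ≤ 0) : p x = 0 := by
  rw [p, intervalIntegral.integral_symm]
  have : ∫ t in x..(0:ℝ), g t = ∫ t in x..(0:ℝ), (0:ℝ) := by
    apply intervalIntegral.integral_congr
    intro t ht
    rw [uIcc_of_le hx] at ht
    exact g_zero_of_nonpos ht.2
  rw [this, intervalIntegral.integral_zero, neg_zero]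

/-- total mass of the cutoff. -/
def c : ℝ := p 1

lemma c_pos : 0 < c := by
  apply intervalIntegral.intervalIntegral_pos_of_pos_on
    (g_cont.intervalIntegrable 0 1) _ one_pos
  intro t ht
  exact lt_of_lt_of_le (lt_min ht.1 (by linarith [ht.2])) (le_max_right _ _)

lemma p_of_one_le {x : ℝ} (hx : 1 ≤ x) : p x = c := by
  have hadd := intervalIntegral.integral_add_adjacent_intervals
    (g_cont.intervalIntegrable (μ := volume) 0 1) (g_cont.intervalIntegrable (μ := volume) 1 x)
  have h0 : ∫ t in (1:ℝ)..x, g t = ∫ t in (1:ℝ)..x, (0:ℝ) := by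
    apply intervalIntegral.integral_congr
    intro t ht
    rw [uIcc_of_le hx] at ht
    exact g_zero_of_one_le ht.1
  have : p x = c + ∫ t in (1:ℝ)..x, g t := by rw [p, c, p, ← hadd]
  rw [this, h0, intervalIntegral.integral_zero, add_zero]

lemma p_nonneg (x : ℝ) : 0 ≤ p x := by
  rcases le_total x 0 with hx | hx
  · rw [p_of_nonpos hx]
  · have := p_mono hx
    rwa [p_of_nonpos le_rfl] at this

lemma p_le_c (x : ℝ) : p x ≤ c := by
  rcases le_total x 1 with hx | hx
  · exact p_mono hx
  · rw [p_of_one_le hx]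

/-- dependent-choice style sequence existence. -/
lemma exists_seq {α : Type*} (Q : α → Prop) (Rel : α → α → Prop)
    (h0 : ∃ x, Q x) (hstep : ∀ x, Q x → ∃ y, Q y ∧ Rel x y) :
    ∃ f : ℕ → α, (∀ j, Q (f j)) ∧ ∀ j, Rel (f j) (f (j + 1)) := by
  classical
  let F : {x : α // Q x} → {x : α // Q x} := fun x =>
    ⟨Classical.choose (hstep x.1 x.2), (Classical.choose_spec (hstep x.1 x.2)).1⟩
  let S : ℕ → {x : α // Q x} := fun j => F^[j] ⟨Classical.choose h0, Classical.choose_spec h0⟩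
  refine ⟨fun j => (S j).1, fun j => (S j).2, fun j => ?_⟩
  have hS : S (j + 1) = F (S j) := Function.iterate_succ_apply' F j _
  show Rel (S j).1 (S (j+1)).1
  rw [hS]
  exact (Classical.choose_spec (hstep (S j).1 (S j).2)).2

end EmbNC


/-- Lemma 5.5 of the paper: if the tail mass of `h` dominates a fixed multiple of the
`z`-weighted mass of `h` over windows `[rₙ - ε, rₙ]` with `rₙ → ∞`, then the embedding
of the weighted Sobolev space `F_R^h` (norm `‖ξ‖² = ∫ ξ² h + ∫ (ξ')² z h`) into
`L²((R,∞), h dz)` is not compact: there is a bounded sequence in `F_R^h` no subsequence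
of which is Cauchy in `L²((R,∞), h dz)`. -/
theorem embedding_not_compact (R : ℝ) (hR : 0 < R) (h : ℝ → ℝ)
    (hmeas : Measurable h) (hnonneg : ∀ z ∈ Ioi R, 0 ≤ h z)
    (ε ϱ : ℝ) (hε : 0 < ε) (hϱ : 0 < ϱ) (r : ℕ → ℝ)
    (hr : Tendsto r atTop atTop)
    (hdom : ∀ n, (∫ z in Ioi (r n), h z) > ϱ * ∫ z in Icc (r n - ε) (r n), z * h z) :
    ∃ (M : ℝ) (ξ : ℕ → ℝ → ℝ),
      (∀ n, Differentiable ℝ (ξ n)) ∧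
      (∀ n, IntegrableOn (fun z => (ξ n z) ^ 2 * h z) (Ioi R)) ∧
      (∀ n, IntegrableOn (fun z => (deriv (ξ n) z) ^ 2 * (z * h z)) (Ioi R)) ∧
      (∀ n, (∫ z in Ioi R, (ξ n z) ^ 2 * h z)
          + (∫ z in Ioi R, (deriv (ξ n) z) ^ 2 * (z * h z)) ≤ M) ∧
      ∀ φ : ℕ → ℕ, StrictMono φ →
        ¬ (∀ δ > (0:ℝ), ∃ N, ∀ m ≥ N, ∀ k ≥ N,
            (∫ z in Ioi R, (ξ (φ m) z - ξ (φ k) z) ^ 2 * h z) < δ) := by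
  classical
  obtain ⟨G, hGdef⟩ : ∃ G : ℝ → ℝ, G = fun t => ∫ z in Ioi t, h z := ⟨_, rfl⟩
  have hG : ∀ t, G t = ∫ z in Ioi t, h z := fun t => by rw [hGdef]
  -- base point `a` with `R < a - ε` and `h` integrable on `Ioi a`
  obtain ⟨n₁, hn₁⟩ : ∃ n, R + ε + 1 ≤ r n := (hr.eventually_ge_atTop _).exists
  set a : ℝ := r n₁ with hadef
  have haR : R < a - ε := by simp only [hadef]; linarith
  have haR' : R < a := by linarith
  have hW₁ : 0 ≤ ∫ z in Icc (a - ε) a, z * h z := by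
    apply setIntegral_nonneg measurableSet_Icc
    intro z hz
    have hzR : R < z := lt_of_lt_of_le haR hz.1
    exact mul_nonneg (hR.trans hzR).le (hnonneg z (mem_Ioi.mpr hzR))
  have hTa : 0 < ∫ z in Ioi a, h z := lt_of_le_of_lt (mul_nonneg hϱ.le hW₁) (hdom n₁)
  have hInta : IntegrableOn h (Ioi a) := by
    by_contra hc
    rw [MeasureTheory.integral_undef hc] at hTa
    exact lt_irrefl 0 hTa
  have hIntTail : ∀ t, a ≤ t → IntegrableOn h (Ioi t) :=
    fun t ht => hInta.mono_set (Ioi_subset_Ioi ht)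
  have hIntIoc : ∀ u v : ℝ, a ≤ u → IntegrableOn h (Ioc u v) :=
    fun u v hu => hInta.mono_set (fun z hz => mem_Ioi.mpr (lt_of_le_of_lt hu hz.1))
  have hsplit : ∀ u v : ℝ, a ≤ u → u ≤ v → G u = (∫ z in Ioc u v, h z) + G v := by
    intro u v hu huv
    rw [hG, hG,
      ← setIntegral_union Ioc_disjoint_Ioi_same measurableSet_Ioi
        (hIntIoc u v hu) (hIntTail v (hu.trans huv)),
      Ioc_union_Ioi_eq_Ioi huv]
  have hGnn : ∀ t, a ≤ t → 0 ≤ G t := by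
    intro t ht
    rw [hG]
    apply setIntegral_nonneg measurableSet_Ioi
    intro z hz
    exact hnonneg z (mem_Ioi.mpr ((lt_of_lt_of_le haR' ht).trans hz))
  have hGmono : ∀ u v : ℝ, a ≤ u → u ≤ v → G v ≤ G u := by
    intro u v hu huv
    have hs := hsplit u v hu huv
    have h0 : 0 ≤ ∫ z in Ioc u v, h z :=
      setIntegral_nonneg measurableSet_Ioc
        (fun z hz => hnonneg z (mem_Ioi.mpr (lt_of_lt_of_le haR' (hu.trans hz.1.le))))
    linarith
  -- tails tend to zero
  have hGto : Tendsto (fun k : ℕ => G (a + k)) atTop (nhds 0) := by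
    have h0 : ∀ k : ℕ, G (a + k) = ∫ z in Ioi a, (Ioi (a + (k : ℝ))).indicator h z := by
      intro k
      rw [hG, MeasureTheory.integral_indicator measurableSet_Ioi,
        Measure.restrict_restrict measurableSet_Ioi,
        inter_eq_left.mpr (Ioi_subset_Ioi (le_add_of_nonneg_right (Nat.cast_nonneg k) : a ≤ a + (k : ℝ)))]
    simp only [h0]
    have hconv := MeasureTheory.tendsto_integral_of_dominated_convergence
      (μ := volume.restrict (Ioi a))
      (F := fun (k : ℕ) z => (Ioi (a + (k : ℝ))).indicator h z) (f := fun _ => (0 : ℝ))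
      (bound := fun z => |h z|)
      (fun k => (hmeas.indicator measurableSet_Ioi).aestronglyMeasurable)
      hInta.norm
      (fun k => Filter.Eventually.of_forall (fun z => by
        rw [Real.norm_eq_abs]
        exact (norm_indicator_le_norm_self h z)))
      (Filter.Eventually.of_forall (fun z => by
        obtain ⟨K, hK⟩ := exists_nat_ge (z - a)
        apply Filter.Tendsto.congr' _ tendsto_const_nhds
        rw [Filter.EventuallyEq, eventually_atTop]
        refine ⟨K, fun k hk => ?_⟩
        have : z ∉ Ioi (a + (k : ℝ)) := by
          simp only [mem_Ioi, not_lt]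
          have : (K : ℝ) ≤ k := Nat.cast_le.mpr hk
          linarith
        exact (indicator_of_notMem this h).symm))
    simpa using hconv
  have hGsmall : ∀ η : ℝ, 0 < η → ∃ t, a ≤ t ∧ G t < η := by
    intro η hη
    obtain ⟨k, hk⟩ := (hGto.eventually (gt_mem_nhds hη)).exists
    exact ⟨a + k, le_add_of_nonneg_right (Nat.cast_nonneg k), hk⟩
  have hfind : ∀ b η : ℝ, 0 < η → ∃ n : ℕ, b < r n - ε ∧ a ≤ r n - ε ∧ G (r n - ε) < η := by
    intro b η hη
    obtain ⟨t, hta, htη⟩ := hGsmall η hη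
    obtain ⟨n, hn⟩ : ∃ n, max b t + ε + 1 ≤ r n := (hr.eventually_ge_atTop _).exists
    have hb : b < r n - ε := by have := le_max_left b t; linarith
    have ht : t ≤ r n - ε := by have := le_max_right b t; linarith
    exact ⟨n, hb, hta.trans ht, lt_of_le_of_lt (hGmono t (r n - ε) hta ht) htη⟩
  have hpos : ∀ n : ℕ, a ≤ r n - ε → 0 < G (r n) := by
    intro n hn
    have hW : 0 ≤ ∫ z in Icc (r n - ε) (r n), z * h z := by
      apply setIntegral_nonneg measurableSet_Icc
      intro z hz
      have hzR : R < z := lt_of_lt_of_le (lt_of_lt_of_le haR' hn) hz.1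
      exact mul_nonneg (hR.trans hzR).le (hnonneg z (mem_Ioi.mpr hzR))
    rw [hG]
    exact lt_of_le_of_lt (mul_nonneg hϱ.le hW) (hdom n)
  -- recursively chosen subsequence
  obtain ⟨N, hNQ, hNRel⟩ := EmbNC.exists_seq (fun n : ℕ => a ≤ r n - ε)
    (fun n m => r n < r m - ε ∧ G (r m - ε) < G (r n) / 2)
    (by obtain ⟨n, _, h2, _⟩ := hfind a 1 one_pos; exact ⟨n, h2⟩)
    (by
      intro n hn
      obtain ⟨m, h1, h2, h3⟩ := hfind (r n) (G (r n) / 2) (by linarith [hpos n hn])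
      exact ⟨m, h2, h1, h3⟩)
  obtain ⟨s, hsdef⟩ : ∃ s : ℕ → ℝ, s = fun j => r (N j) := ⟨_, rfl⟩
  have hsa : ∀ j, a ≤ s j - ε := fun j => by rw [hsdef]; exact hNQ j
  have hss : ∀ j, s j < s (j + 1) - ε := fun j => by rw [hsdef]; exact (hNRel j).1
  have hGhalf : ∀ j, G (s (j + 1) - ε) < G (s j) / 2 := fun j => by
    rw [hsdef]; exact (hNRel j).2
  have hsmono : Monotone s := monotone_nat_of_le_succ (fun j => by linarith [hss j, hε])
  have hsR : ∀ j, R < s j - ε := fun j => lt_of_lt_of_le haR' (hsa j)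
  have hTpos : ∀ j, 0 < G (s j) := fun j => by rw [hsdef]; exact hpos (N j) (hNQ j)
  have hdomj : ∀ j, (∫ z in Ioi (s j), h z) > ϱ * ∫ z in Icc (s j - ε) (s j), z * h z := by
    intro j; rw [hsdef]; exact hdom (N j)
  have hkey : ∀ j i, j < i → G (s i - ε) < G (s j) / 2 := by
    intro j i hji
    have h1 : s (j + 1) - ε ≤ s i - ε := by
      have := hsmono (Nat.succ_le_of_lt hji); linarith
    exact lt_of_le_of_lt (hGmono _ _ (hsa (j + 1)) h1) (hGhalf j)
  -- the sequence ξ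
  obtain ⟨ξ, hxdef⟩ : ∃ ξ : ℕ → ℝ → ℝ,
      ξ = fun j z => EmbNC.p ((z - (s j - ε)) / ε) / (EmbNC.c * Real.sqrt (G (s j))) :=
    ⟨_, rfl⟩
  have hxval : ∀ j z, ξ j z = EmbNC.p ((z - (s j - ε)) / ε) / (EmbNC.c * Real.sqrt (G (s j))) :=
    fun j z => by rw [hxdef]
  have hDpos : ∀ j, 0 < EmbNC.c * Real.sqrt (G (s j)) :=
    fun j => mul_pos EmbNC.c_pos (Real.sqrt_pos.mpr (hTpos j))
  have hxHD : ∀ j z, HasDerivAt (ξ j)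
      (EmbNC.g ((z - (s j - ε)) / ε) * (1 / ε) / (EmbNC.c * Real.sqrt (G (s j)))) z := by
    intro j z
    have h1 : HasDerivAt (fun z : ℝ => (z - (s j - ε)) / ε) (1 / ε) z := by
      simpa using ((hasDerivAt_id z).sub_const (s j - ε)).div_const ε
    have h2 := ((EmbNC.p_hasDerivAt ((z - (s j - ε)) / ε)).comp z h1).div_const
      (EmbNC.c * Real.sqrt (G (s j)))
    rw [hxdef]
    exact h2
  have hdiff : ∀ j, Differentiable ℝ (ξ j) := fun j z => (hxHD j z).differentiableAt
  have hcont : ∀ j, Continuous (ξ j) := fun j => (hdiff j).continuous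
  have hderiv : ∀ j z, deriv (ξ j) z
      = EmbNC.g ((z - (s j - ε)) / ε) * (1 / ε) / (EmbNC.c * Real.sqrt (G (s j))) :=
    fun j z => (hxHD j z).deriv
  -- pointwise values and bounds
  have hx0 : ∀ j z, z ≤ s j - ε → ξ j z = 0 := by
    intro j z hz
    have hple : (z - (s j - ε)) / ε ≤ 0 := div_nonpos_of_nonpos_of_nonneg (by linarith) hε.le
    rw [hxval, EmbNC.p_of_nonpos hple, zero_div]
  have hx1 : ∀ j z, s j ≤ z → ξ j z = 1 / Real.sqrt (G (s j)) := by
    intro j z hz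
    have h1 : (1 : ℝ) ≤ (z - (s j - ε)) / ε := (le_div_iff₀ hε).mpr (by linarith)
    rw [hxval, EmbNC.p_of_one_le h1, div_mul_eq_div_div, div_self EmbNC.c_pos.ne']
  have hxnn : ∀ j z, 0 ≤ ξ j z :=
    fun j z => by rw [hxval]; exact div_nonneg (EmbNC.p_nonneg _) (hDpos j).le
  have hx2 : ∀ j z, (ξ j z) ^ 2 ≤ 1 / G (s j) := by
    intro j z
    have hle : ξ j z ≤ 1 / Real.sqrt (G (s j)) := by
      rw [hxval]
      rw [div_le_div_iff₀ (hDpos j) (Real.sqrt_pos.mpr (hTpos j))]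
      calc EmbNC.p ((z - (s j - ε)) / ε) * Real.sqrt (G (s j))
          ≤ EmbNC.c * Real.sqrt (G (s j)) :=
            mul_le_mul_of_nonneg_right (EmbNC.p_le_c _) (Real.sqrt_nonneg _)
        _ = 1 * (EmbNC.c * Real.sqrt (G (s j))) := by ring
    have h2 : (ξ j z) ^ 2 ≤ (1 / Real.sqrt (G (s j))) ^ 2 :=
      pow_le_pow_left₀ (hxnn j z) hle 2
    rwa [div_pow, one_pow, Real.sq_sqrt (hTpos j).le] at h2
  have hd0 : ∀ j z, z ≤ s j - ε → deriv (ξ j) z = 0 := by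
    intro j z hz
    have hple : (z - (s j - ε)) / ε ≤ 0 := div_nonpos_of_nonpos_of_nonneg (by linarith) hε.le
    rw [hderiv, EmbNC.g_zero_of_nonpos hple, zero_mul, zero_div]
  have hd1 : ∀ j z, s j ≤ z → deriv (ξ j) z = 0 := by
    intro j z hz
    have h1 : (1 : ℝ) ≤ (z - (s j - ε)) / ε := (le_div_iff₀ hε).mpr (by linarith)
    rw [hderiv, EmbNC.g_zero_of_one_le h1, zero_mul, zero_div]
  have hdbd : ∀ j z, (deriv (ξ j) z) ^ 2 ≤ 1 / (ε ^ 2 * (EmbNC.c ^ 2 * G (s j))) := by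
    intro j z
    rw [hderiv]
    have hgz := EmbNC.g_nonneg ((z - (s j - ε)) / ε)
    have hgo := EmbNC.g_le_one ((z - (s j - ε)) / ε)
    have hD2 : (EmbNC.c * Real.sqrt (G (s j))) ^ 2 = EmbNC.c ^ 2 * G (s j) := by
      rw [mul_pow, Real.sq_sqrt (hTpos j).le]
    rw [div_pow, mul_pow, hD2]
    have hnum : (EmbNC.g ((z - (s j - ε)) / ε)) ^ 2 * (1 / ε) ^ 2 ≤ (1 / ε) ^ 2 := by
      have hsq : (EmbNC.g ((z - (s j - ε)) / ε)) ^ 2 ≤ 1 := by nlinarith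
      calc (EmbNC.g ((z - (s j - ε)) / ε)) ^ 2 * (1 / ε) ^ 2
          ≤ 1 * (1 / ε) ^ 2 := mul_le_mul_of_nonneg_right hsq (sq_nonneg _)
        _ = (1 / ε) ^ 2 := one_mul _
    have hden : (0 : ℝ) < EmbNC.c ^ 2 * G (s j) := by
      have := EmbNC.c_pos; have := hTpos j; positivity
    calc EmbNC.g ((z - (s j - ε)) / ε) ^ 2 * (1 / ε) ^ 2 / (EmbNC.c ^ 2 * G (s j))
        ≤ (1 / ε) ^ 2 / (EmbNC.c ^ 2 * G (s j)) := by
          exact (div_le_div_iff_of_pos_right hden).mpr hnum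
      _ = 1 / (ε ^ 2 * (EmbNC.c ^ 2 * G (s j))) := by
          rw [div_pow, one_pow, div_div]
  -- integrability of z*h on windows
  have hIntZH : ∀ j, IntegrableOn (fun z => z * h z) (Ioc (s j - ε) (s j)) := by
    intro j
    have hhi : IntegrableOn h (Ioc (s j - ε) (s j)) := hIntIoc _ _ (hsa j)
    apply Integrable.mono (hhi.const_mul (s j))
    · exact (measurable_id.mul hmeas).aestronglyMeasurable
    · filter_upwards [ae_restrict_mem measurableSet_Ioc] with z hz
      rw [Real.norm_eq_abs, Real.norm_eq_abs, abs_mul, abs_mul]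
      have hz0 : 0 < z := (hR.trans (hsR j)).trans hz.1
      rw [abs_of_pos hz0]
      exact mul_le_mul_of_nonneg_right (hz.2.trans (le_abs_self _)) (abs_nonneg _)
  -- window weighted mass is controlled by the tail mass
  have hWT : ∀ j, (∫ z in Ioc (s j - ε) (s j), z * h z) < G (s j) / ϱ := by
    intro j
    have hd := hdomj j
    rw [integral_Icc_eq_integral_Ioc] at hd
    rw [hG, lt_div_iff₀ hϱ]
    linarith
  -- continuity of the derivative
  have hdc : ∀ j, Continuous (fun z => deriv (ξ j) z) := by
    intro j
    have : (fun z => deriv (ξ j) z)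
        = fun z => EmbNC.g ((z - (s j - ε)) / ε) * (1 / ε) / (EmbNC.c * Real.sqrt (G (s j))) :=
      funext (hderiv j)
    rw [this]
    exact ((EmbNC.g_cont.comp ((continuous_id.sub continuous_const).div_const ε)).mul continuous_const).div_const _
  -- integrability of ξ² h
  have hI2 : ∀ j, IntegrableOn (fun z => (ξ j z) ^ 2 * h z) (Ioi R) := by
    intro j
    rw [← Ioc_union_Ioi_eq_Ioi (hsR j).le]
    apply IntegrableOn.union
    · exact integrableOn_zero.congr_fun
        (fun z hz => by rw [hx0 j z hz.2]; simp) measurableSet_Ioc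
    · apply Integrable.mono ((hIntTail _ (hsa j)).const_mul (1 / G (s j)))
      · exact (((hcont j).pow 2).measurable.mul hmeas).aestronglyMeasurable
      · filter_upwards with z
        rw [Real.norm_eq_abs, Real.norm_eq_abs, abs_mul, abs_mul]
        rw [abs_of_nonneg (sq_nonneg (ξ j z)),
          abs_of_nonneg (div_pos one_pos (hTpos j)).le]
        exact mul_le_mul_of_nonneg_right (hx2 j z) (abs_nonneg _)
  -- integrability of (ξ')² z h
  have hI3 : ∀ j, IntegrableOn (fun z => (deriv (ξ j) z) ^ 2 * (z * h z)) (Ioi R) := by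
    intro j
    rw [← Ioc_union_Ioi_eq_Ioi (hsR j).le,
      ← Ioc_union_Ioi_eq_Ioi (show s j - ε ≤ s j by linarith)]
    apply IntegrableOn.union
    · exact integrableOn_zero.congr_fun
        (fun z hz => by rw [hd0 j z hz.2]; simp) measurableSet_Ioc
    apply IntegrableOn.union
    · apply Integrable.mono ((hIntZH j).const_mul (1 / (ε ^ 2 * (EmbNC.c ^ 2 * G (s j)))))
      · exact (((hdc j).pow 2).measurable.mul (measurable_id.mul hmeas)).aestronglyMeasurable
      · filter_upwards with z
        have hCpos : (0:ℝ) < 1 / (ε ^ 2 * (EmbNC.c ^ 2 * G (s j))) := by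
          have h1 := hTpos j; have h2 := EmbNC.c_pos; positivity
        rw [Real.norm_eq_abs, Real.norm_eq_abs, abs_mul (deriv (ξ j) z ^ 2),
          abs_mul (1 / (ε ^ 2 * (EmbNC.c ^ 2 * G (s j)))),
          abs_of_nonneg (sq_nonneg (deriv (ξ j) z)), abs_of_nonneg hCpos.le]
        exact mul_le_mul_of_nonneg_right (hdbd j z) (abs_nonneg _)
    · exact integrableOn_zero.congr_fun
        (fun z hz => by rw [hd1 j z (le_of_lt hz)]; simp) measurableSet_Ioi
  -- L² bound on ξ
  have hB1 : ∀ j, (∫ z in Ioi R, (ξ j z) ^ 2 * h z) ≤ 1 + 1 / (ϱ * R) := by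
    intro j
    have hT := hTpos j
    have hIa : IntegrableOn (fun z => (ξ j z) ^ 2 * h z) (Ioc R (s j - ε)) :=
      (hI2 j).mono_set (fun z hz => hz.1)
    have hIb : IntegrableOn (fun z => (ξ j z) ^ 2 * h z) (Ioi (s j - ε)) :=
      (hI2 j).mono_set (Ioi_subset_Ioi (hsR j).le)
    rw [← Ioc_union_Ioi_eq_Ioi (hsR j).le,
      setIntegral_union Ioc_disjoint_Ioi_same measurableSet_Ioi hIa hIb]
    have hz1 : (∫ z in Ioc R (s j - ε), (ξ j z) ^ 2 * h z) = 0 := by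
      rw [setIntegral_congr_fun measurableSet_Ioc
        (fun z hz => by rw [hx0 j z hz.2]; simp : EqOn _ (fun _ => (0:ℝ)) _)]
      exact integral_zero _ _
    have hmain : (∫ z in Ioi (s j - ε), (ξ j z) ^ 2 * h z)
        ≤ ∫ z in Ioi (s j - ε), (1 / G (s j)) * h z := by
      apply setIntegral_mono_on hIb ((hIntTail _ (hsa j)).const_mul _) measurableSet_Ioi
      intro z hz
      exact mul_le_mul_of_nonneg_right (hx2 j z)
        (hnonneg z (mem_Ioi.mpr ((hsR j).trans hz)))
    have hsum : (∫ z in Ioi (s j - ε), (1 / G (s j)) * h z)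
        = (1 / G (s j)) * G (s j - ε) := by
      rw [MeasureTheory.integral_const_mul, hG (s j - ε)]
    have hGsplit := hsplit (s j - ε) (s j) (hsa j) (by linarith)
    have hWh : (∫ z in Ioc (s j - ε) (s j), h z)
        ≤ (∫ z in Ioc (s j - ε) (s j), z * h z) / R := by
      rw [le_div_iff₀ hR]
      have e1 : (∫ z in Ioc (s j - ε) (s j), h z) * R
          = ∫ z in Ioc (s j - ε) (s j), h z * R := by
        rw [MeasureTheory.integral_mul_const]
      rw [e1]
      apply setIntegral_mono_on ((hIntIoc _ _ (hsa j)).mul_const R) (hIntZH j) measurableSet_Ioc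
      intro z hz
      have hzR : R < z := (hsR j).trans hz.1
      have hh := hnonneg z (mem_Ioi.mpr hzR)
      nlinarith
    have hWb : (∫ z in Ioc (s j - ε) (s j), h z) ≤ G (s j) / (ϱ * R) := by
      calc (∫ z in Ioc (s j - ε) (s j), h z)
          ≤ (∫ z in Ioc (s j - ε) (s j), z * h z) / R := hWh
        _ ≤ (G (s j) / ϱ) / R := (div_le_div_iff_of_pos_right hR).mpr (hWT j).le
        _ = G (s j) / (ϱ * R) := by rw [div_div]
    have e2 : (1 / G (s j)) * G (s j - ε) ≤ 1 / (ϱ * R) + 1 := by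
      rw [hGsplit]
      have step : (1 / G (s j)) * ((∫ z in Ioc (s j - ε) (s j), h z) + G (s j))
          ≤ (1 / G (s j)) * (G (s j) / (ϱ * R) + G (s j)) :=
        mul_le_mul_of_nonneg_left (by linarith) (by positivity)
      calc (1 / G (s j)) * ((∫ z in Ioc (s j - ε) (s j), h z) + G (s j)) ≤ _ := step
        _ = 1 / (ϱ * R) + 1 := by field_simp
    linarith [hmain.trans_eq hsum]
  -- L² bound on ξ'
  have hB2 : ∀ j, (∫ z in Ioi R, (deriv (ξ j) z) ^ 2 * (z * h z))
      ≤ 1 / (ε ^ 2 * (EmbNC.c ^ 2 * ϱ)) := by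
    intro j
    have hT := hTpos j
    have hc0 := EmbNC.c_pos
    have hImid : IntegrableOn (fun z => (deriv (ξ j) z) ^ 2 * (z * h z))
        (Ioc (s j - ε) (s j)) :=
      (hI3 j).mono_set (fun z hz => mem_Ioi.mpr ((hsR j).trans hz.1))
    have hIa : IntegrableOn (fun z => (deriv (ξ j) z) ^ 2 * (z * h z)) (Ioc R (s j - ε)) :=
      (hI3 j).mono_set (fun z hz => hz.1)
    have hIb : IntegrableOn (fun z => (deriv (ξ j) z) ^ 2 * (z * h z)) (Ioi (s j - ε)) :=
      (hI3 j).mono_set (Ioi_subset_Ioi (hsR j).le)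
    have hIc : IntegrableOn (fun z => (deriv (ξ j) z) ^ 2 * (z * h z)) (Ioi (s j)) :=
      (hI3 j).mono_set (Ioi_subset_Ioi (by linarith [hsR j] : R ≤ s j))
    rw [← Ioc_union_Ioi_eq_Ioi (hsR j).le,
      setIntegral_union Ioc_disjoint_Ioi_same measurableSet_Ioi hIa hIb,
      ← Ioc_union_Ioi_eq_Ioi (show s j - ε ≤ s j by linarith),
      setIntegral_union Ioc_disjoint_Ioi_same measurableSet_Ioi hImid hIc]
    have hz1 : (∫ z in Ioc R (s j - ε), (deriv (ξ j) z) ^ 2 * (z * h z)) = 0 := by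
      rw [setIntegral_congr_fun measurableSet_Ioc
        (fun z hz => by rw [hd0 j z hz.2]; simp : EqOn _ (fun _ => (0:ℝ)) _)]
      exact integral_zero _ _
    have hz2 : (∫ z in Ioi (s j), (deriv (ξ j) z) ^ 2 * (z * h z)) = 0 := by
      rw [setIntegral_congr_fun measurableSet_Ioi
        (fun z hz => by rw [hd1 j z (le_of_lt hz)]; simp : EqOn _ (fun _ => (0:ℝ)) _)]
      exact integral_zero _ _
    have hmid : (∫ z in Ioc (s j - ε) (s j), (deriv (ξ j) z) ^ 2 * (z * h z))
        ≤ ∫ z in Ioc (s j - ε) (s j), (1 / (ε ^ 2 * (EmbNC.c ^ 2 * G (s j)))) * (z * h z) := by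
      apply setIntegral_mono_on hImid ((hIntZH j).const_mul _) measurableSet_Ioc
      intro z hz
      have hzR : R < z := (hsR j).trans hz.1
      have hzh : 0 ≤ z * h z := mul_nonneg (hR.trans hzR).le (hnonneg z (mem_Ioi.mpr hzR))
      exact mul_le_mul_of_nonneg_right (hdbd j z) hzh
    have hval : (∫ z in Ioc (s j - ε) (s j), (1 / (ε ^ 2 * (EmbNC.c ^ 2 * G (s j)))) * (z * h z))
        ≤ 1 / (ε ^ 2 * (EmbNC.c ^ 2 * ϱ)) := by
      rw [MeasureTheory.integral_const_mul]
      have hW0 : 0 ≤ ∫ z in Ioc (s j - ε) (s j), z * h z := by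
        apply setIntegral_nonneg measurableSet_Ioc
        intro z hz
        have hzR : R < z := (hsR j).trans hz.1
        exact mul_nonneg (hR.trans hzR).le (hnonneg z (mem_Ioi.mpr hzR))
      calc (1 / (ε ^ 2 * (EmbNC.c ^ 2 * G (s j)))) * ∫ z in Ioc (s j - ε) (s j), z * h z
          ≤ (1 / (ε ^ 2 * (EmbNC.c ^ 2 * G (s j)))) * (G (s j) / ϱ) :=
            mul_le_mul_of_nonneg_left (hWT j).le (by positivity)
        _ = 1 / (ε ^ 2 * (EmbNC.c ^ 2 * ϱ)) := by field_simp
    linarith [hmid.trans hval]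
  -- lower bound for differences along the sequence
  have hlow : ∀ j i, j < i →
      (1 : ℝ) / 2 ≤ ∫ z in Ioi R, (ξ i z - ξ j z) ^ 2 * h z := by
    intro j i hji
    have hT := hTpos j
    have hu : a ≤ s j := le_trans (hsa j) (by linarith)
    have huv : s j < s i - ε :=
      lt_of_lt_of_le (hss j) (by have := hsmono (Nat.succ_le_of_lt hji); linarith)
    have hFint : IntegrableOn (fun z => (ξ i z - ξ j z) ^ 2 * h z) (Ioi R) := by
      apply Integrable.mono (((hI2 i).const_mul 2).add ((hI2 j).const_mul 2))
      · exact ((((hcont i).sub (hcont j)).pow 2).measurable.mul hmeas).aestronglyMeasurable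
      · filter_upwards [ae_restrict_mem measurableSet_Ioi] with z hz
        have hh := hnonneg z hz
        have hbd : (ξ i z - ξ j z) ^ 2 * h z
            ≤ 2 * (ξ i z ^ 2 * h z) + 2 * (ξ j z ^ 2 * h z) := by
          nlinarith [sq_nonneg (ξ i z + ξ j z)]
        have hnn2 : (0:ℝ) ≤ 2 * (ξ i z ^ 2 * h z) + 2 * (ξ j z ^ 2 * h z) := by
          have := sq_nonneg (ξ i z); have := sq_nonneg (ξ j z); positivity
        show ‖(ξ i z - ξ j z) ^ 2 * h z‖ ≤ ‖2 * (ξ i z ^ 2 * h z) + 2 * (ξ j z ^ 2 * h z)‖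
        rw [Real.norm_eq_abs, Real.norm_eq_abs, abs_mul, abs_of_nonneg (sq_nonneg _),
          abs_of_nonneg hh, abs_of_nonneg hnn2]
        exact hbd
    have hsub : Ioc (s j) (s i - ε) ⊆ Ioi R :=
      fun z hz => mem_Ioi.mpr (lt_trans haR' (lt_of_le_of_lt hu hz.1))
    have hstep1 : (∫ z in Ioc (s j) (s i - ε), (ξ i z - ξ j z) ^ 2 * h z)
        ≤ ∫ z in Ioi R, (ξ i z - ξ j z) ^ 2 * h z := by
      apply setIntegral_mono_set hFint
      · filter_upwards [ae_restrict_mem measurableSet_Ioi] with z hz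
        exact mul_nonneg (sq_nonneg _) (hnonneg z hz)
      · exact HasSubset.Subset.eventuallyLE hsub
    have hstep2 : (∫ z in Ioc (s j) (s i - ε), (ξ i z - ξ j z) ^ 2 * h z)
        = (1 / G (s j)) * ∫ z in Ioc (s j) (s i - ε), h z := by
      rw [setIntegral_congr_fun measurableSet_Ioc
        (fun z hz => by
          show (ξ i z - ξ j z) ^ 2 * h z = 1 / G (s j) * h z
          rw [hx0 i z hz.2, hx1 j z hz.1.le, zero_sub, neg_sq, div_pow, one_pow,
            Real.sq_sqrt (hTpos j).le]
          : EqOn (fun z => (ξ i z - ξ j z) ^ 2 * h z)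
              (fun z => (1 / G (s j)) * h z) (Ioc (s j) (s i - ε))),
        MeasureTheory.integral_const_mul]
    have hGuv := hsplit (s j) (s i - ε) hu huv.le
    have hhalf := hkey j i hji
    have hWW : G (s j) / 2 ≤ ∫ z in Ioc (s j) (s i - ε), h z := by linarith
    have hfin : (1 : ℝ) / 2 ≤ (1 / G (s j)) * ∫ z in Ioc (s j) (s i - ε), h z := by
      have := mul_le_mul_of_nonneg_left hWW (le_of_lt (div_pos one_pos hT) :
        (0:ℝ) ≤ 1 / G (s j))
      calc (1 : ℝ) / 2 = (1 / G (s j)) * (G (s j) / 2) := by field_simp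
        _ ≤ _ := this
    linarith [hstep2 ▸ hstep1]
  -- conclusion
  refine ⟨(1 + 1 / (ϱ * R)) + 1 / (ε ^ 2 * (EmbNC.c ^ 2 * ϱ)), ξ, hdiff, hI2, hI3,
    fun j => add_le_add (hB1 j) (hB2 j), ?_⟩
  intro φ hφ hC
  obtain ⟨K, hK⟩ := hC (1 / 2) (by norm_num)
  have h1 := hK (K + 1) (by omega) K (by omega)
  have h2 := hlow (φ K) (φ (K + 1)) (hφ (lt_add_one K))
  linarith
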